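/- Let p be a strictly positive joint pmf on Fin m × Fin n and q a strictly positive conditional pmf, and let β ∈ ℝ. Then q is a fixed point of the LatentSearch update, i.e. T_β(q) = q, if and only if q is a first-order stationary point of the loss L_β subject to the normalization constraints; that is, if and only if for every direction v : Fin k → Fin m → Fin n → ℝ satisfying ∑_z v z x y = 0 for all x, y, the directional (Fréchet) derivative of L_β at q along v equals zero. Equivalently, T_β(q) = q if and only if there exists δ : Fin m → Fin n → ℝ such that log( q z x y · (qZ z)^{1−β} / (qX z x · qY z y) ) = δ x y for all z, x, y. -/

import Mathlib

open Real Finset Filter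

/-- A strictly positive joint pmf on `Fin m × Fin n`. -/
def IsJointPMF {m n : ℕ} (p : Fin m → Fin n → ℝ) : Prop :=
  (∀ x y, 0 < p x y) ∧ (∑ x, ∑ y, p x y = 1)

/-- A strictly positive conditional pmf `q z x y = q(z | x, y)`. -/
def IsCondPMF {m n k : ℕ} (q : Fin k → Fin m → Fin n → ℝ) : Prop :=
  (∀ z x y, 0 < q z x y) ∧ (∀ x y, ∑ z, q z x y = 1)

/-- Marginal `q(z | x)`. -/
noncomputable def qX {m n k : ℕ} (p : Fin m → Fin n → ℝ)
    (q : Fin k → Fin m → Fin n → ℝ) (z : Fin k) (x : Fin m) : ℝ :=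
  (∑ y, q z x y * p x y) / (∑ y, p x y)

/-- Marginal `q(z | y)`. -/
noncomputable def qY {m n k : ℕ} (p : Fin m → Fin n → ℝ)
    (q : Fin k → Fin m → Fin n → ℝ) (z : Fin k) (y : Fin n) : ℝ :=
  (∑ x, q z x y * p x y) / (∑ x, p x y)

/-- Marginal `q(z)`. -/
noncomputable def qZ {m n k : ℕ} (p : Fin m → Fin n → ℝ)
    (q : Fin k → Fin m → Fin n → ℝ) (z : Fin k) : ℝ :=
  ∑ x, ∑ y, q z x y * p x y

/-- The LatentSearch update `T_β(q)`. Here `(qZ z) ^ (1 - β)` is the real power `rpow`. -/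
noncomputable def latentUpdate {m n k : ℕ} (β : ℝ) (p : Fin m → Fin n → ℝ)
    (q : Fin k → Fin m → Fin n → ℝ) : Fin k → Fin m → Fin n → ℝ :=
  fun z x y =>
    (qX p q z x * qY p q z y / (qZ p q z) ^ (1 - β)) /
      (∑ z', qX p q z' x * qY p q z' y / (qZ p q z') ^ (1 - β))

/-- The loss `L_β(q) = I(X;Y|Z) + β H(Z)` computed from the joint `r(x,y,z) = q z x y * p x y`. -/
noncomputable def loss {m n k : ℕ} (β : ℝ) (p : Fin m → Fin n → ℝ)
    (q : Fin k → Fin m → Fin n → ℝ) : ℝ :=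
  (∑ x, ∑ y, ∑ z, (q z x y * p x y) *
      Real.log ((q z x y * p x y) * qZ p q z /
        ((∑ y', q z x y' * p x y') * (∑ x', q z x' y * p x' y)))) -
    β * ∑ z, qZ p q z * Real.log (qZ p q z)

/-- The mutual information `I(X;Y)` of the observed joint pmf `p`. -/
noncomputable def mutualInfo {m n : ℕ} (p : Fin m → Fin n → ℝ) : ℝ :=
  ∑ x, ∑ y, p x y * Real.log (p x y / ((∑ y', p x y') * (∑ x', p x' y)))

lemma hasDerivAt_term
    {m n k : ℕ} (p : Fin m → Fin n → ℝ) (hp : ∀ x y, 0 < p x y)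
    (q : Fin k → Fin m → Fin n → ℝ) (hq : ∀ z x y, 0 < q z x y)
    (v : Fin k → Fin m → Fin n → ℝ) (z : Fin k) (x : Fin m) (y : Fin n) :
    HasDerivAt (fun t : ℝ =>
      ((q z x y + t * v z x y) * p x y) *
        Real.log (((q z x y + t * v z x y) * p x y) *
          (∑ x', ∑ y', (q z x' y' + t * v z x' y') * p x' y') /
          ((∑ y', (q z x y' + t * v z x y') * p x y') *
           (∑ x', (q z x' y + t * v z x' y) * p x' y))))
      (v z x y * p x y *
        (Real.log ((q z x y * p x y) * (∑ x', ∑ y', q z x' y' * p x' y') /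
          ((∑ y', q z x y' * p x y') * (∑ x', q z x' y * p x' y))) + 1)
       + (q z x y * p x y) *
         ((∑ x', ∑ y', v z x' y' * p x' y') / (∑ x', ∑ y', q z x' y' * p x' y')
          - (∑ y', v z x y' * p x y') / (∑ y', q z x y' * p x y')
          - (∑ x', v z x' y * p x' y) / (∑ x', q z x' y * p x' y))) 0 := by
  have base : ∀ (z' : Fin k) (x' : Fin m) (y' : Fin n),
      HasDerivAt (fun t : ℝ => (q z' x' y' + t * v z' x' y') * p x' y')
        (v z' x' y' * p x' y') 0 := by
    intro z' x' y'
    simpa using (((hasDerivAt_id (0:ℝ)).mul_const (v z' x' y')).const_add (q z' x' y')).mul_const (p x' y')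
  have ha := base z x y
  have hb1 : HasDerivAt (fun t : ℝ => ∑ y', (q z x y' + t * v z x y') * p x y')
      (∑ y', v z x y' * p x y') 0 := HasDerivAt.fun_sum fun y' _ => base z x y'
  have hb2 : HasDerivAt (fun t : ℝ => ∑ x', (q z x' y + t * v z x' y) * p x' y)
      (∑ x', v z x' y * p x' y) 0 := HasDerivAt.fun_sum fun x' _ => base z x' y
  have hc : HasDerivAt (fun t : ℝ => ∑ x', ∑ y', (q z x' y' + t * v z x' y') * p x' y')
      (∑ x', ∑ y', v z x' y' * p x' y') 0 :=
    HasDerivAt.fun_sum fun x' _ => HasDerivAt.fun_sum fun y' _ => base z x' y'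
  have ha0 : (0:ℝ) < q z x y * p x y := mul_pos (hq z x y) (hp x y)
  have hb10 : (0:ℝ) < ∑ y', q z x y' * p x y' :=
    Finset.sum_pos (fun y' _ => mul_pos (hq z x y') (hp x y')) ⟨y, mem_univ y⟩
  have hb20 : (0:ℝ) < ∑ x', q z x' y * p x' y :=
    Finset.sum_pos (fun x' _ => mul_pos (hq z x' y) (hp x' y)) ⟨x, mem_univ x⟩
  have hc0 : (0:ℝ) < ∑ x', ∑ y', q z x' y' * p x' y' :=
    Finset.sum_pos (fun x' _ => Finset.sum_pos (fun y' _ => mul_pos (hq z x' y') (hp x' y')) ⟨y, mem_univ y⟩) ⟨x, mem_univ x⟩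
  have hbne : (∑ y', (q z x y' + (0:ℝ) * v z x y') * p x y') * (∑ x', (q z x' y + (0:ℝ) * v z x' y) * p x' y) ≠ 0 := by
    simpa using (mul_pos hb10 hb20).ne'
  have hu := (ha.mul hc).div (hb1.mul hb2) hbne
  have hune : ((q z x y + (0:ℝ) * v z x y) * p x y) *
      (∑ x', ∑ y', (q z x' y' + (0:ℝ) * v z x' y') * p x' y') /
      ((∑ y', (q z x y' + (0:ℝ) * v z x y') * p x y') *
       (∑ x', (q z x' y + (0:ℝ) * v z x' y) * p x' y)) ≠ 0 := by
    simpa using (div_pos (mul_pos ha0 hc0) (mul_pos hb10 hb20)).ne'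
  have hfin := ha.mul (hu.log hune)
  refine (hfin.congr_deriv ?_)
  simp only [zero_mul, add_zero, Pi.mul_apply, Pi.div_apply]
  have hqne : q z x y ≠ 0 := (hq z x y).ne'
  field_simp
  ring

lemma hasDerivAt_zterm
    {m n k : ℕ} (p : Fin m → Fin n → ℝ) (hp : ∀ x y, 0 < p x y)
    (q : Fin k → Fin m → Fin n → ℝ) (hq : ∀ z x y, 0 < q z x y)
    (hm : 1 ≤ m) (hn : 1 ≤ n)
    (v : Fin k → Fin m → Fin n → ℝ) (z : Fin k) :
    HasDerivAt (fun t : ℝ =>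
      (∑ x', ∑ y', (q z x' y' + t * v z x' y') * p x' y') *
        Real.log (∑ x', ∑ y', (q z x' y' + t * v z x' y') * p x' y'))
      ((∑ x', ∑ y', v z x' y' * p x' y') *
        Real.log (∑ x', ∑ y', q z x' y' * p x' y') +
       (∑ x', ∑ y', v z x' y' * p x' y')) 0 := by
  have base : ∀ (x' : Fin m) (y' : Fin n),
      HasDerivAt (fun t : ℝ => (q z x' y' + t * v z x' y') * p x' y')
        (v z x' y' * p x' y') 0 := by
    intro x' y'
    simpa using (((hasDerivAt_id (0:ℝ)).mul_const (v z x' y')).const_add (q z x' y')).mul_const (p x' y')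
  have hc : HasDerivAt (fun t : ℝ => ∑ x', ∑ y', (q z x' y' + t * v z x' y') * p x' y')
      (∑ x', ∑ y', v z x' y' * p x' y') 0 :=
    HasDerivAt.fun_sum fun x' _ => HasDerivAt.fun_sum fun y' _ => base x' y'
  obtain ⟨x⟩ : Nonempty (Fin m) := ⟨⟨0, hm⟩⟩
  obtain ⟨y⟩ : Nonempty (Fin n) := ⟨⟨0, hn⟩⟩
  have hc0 : (0:ℝ) < ∑ x', ∑ y', q z x' y' * p x' y' :=
    Finset.sum_pos (fun x' _ => Finset.sum_pos (fun y' _ => mul_pos (hq z x' y') (hp x' y')) ⟨y, mem_univ y⟩) ⟨x, mem_univ x⟩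
  have hcne : (∑ x', ∑ y', (q z x' y' + (0:ℝ) * v z x' y') * p x' y') ≠ 0 := by
    simpa using hc0.ne'
  have hfin := hc.mul (hc.log hcne)
  refine (hfin.congr_deriv ?_)
  simp only [zero_mul, add_zero, Pi.mul_apply, Pi.div_apply]
  field_simp

lemma value_eq {m n k : ℕ} (hm : 1 ≤ m) (hn : 1 ≤ n) (β : ℝ) (p : Fin m → Fin n → ℝ) (hp : ∀ x y, 0 < p x y)
    (q : Fin k → Fin m → Fin n → ℝ) (hq : ∀ z x y, 0 < q z x y)
    (v : Fin k → Fin m → Fin n → ℝ) (hv : ∀ x y, ∑ z, v z x y = 0) :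
    (∑ x, ∑ y, ∑ z,
      (v z x y * p x y *
        (Real.log ((q z x y * p x y) * (∑ x', ∑ y', q z x' y' * p x' y') /
          ((∑ y', q z x y' * p x y') * (∑ x', q z x' y * p x' y))) + 1)
       + (q z x y * p x y) *
         ((∑ x', ∑ y', v z x' y' * p x' y') / (∑ x', ∑ y', q z x' y' * p x' y')
          - (∑ y', v z x y' * p x y') / (∑ y', q z x y' * p x y')
          - (∑ x', v z x' y * p x' y) / (∑ x', q z x' y * p x' y)))) -
      β * ∑ z, ((∑ x', ∑ y', v z x' y' * p x' y') * Real.log (∑ x', ∑ y', q z x' y' * p x' y')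
                + (∑ x', ∑ y', v z x' y' * p x' y'))
    = ∑ z, ∑ x, ∑ y, v z x y * p x y *
        Real.log (q z x y * (qZ p q z) ^ (1 - β) / (qX p q z x * qY p q z y)) := by
  haveI : Nonempty (Fin m) := ⟨⟨0, hm⟩⟩
  haveI : Nonempty (Fin n) := ⟨⟨0, hn⟩⟩
  simp only [qX, qY, qZ]
  -- basic positivity
  have hB1 : ∀ z x, (0:ℝ) < ∑ y', q z x y' * p x y' := fun z x =>
    Finset.sum_pos (fun y' _ => mul_pos (hq z x y') (hp x y')) univ_nonempty
  have hB2 : ∀ z y, (0:ℝ) < ∑ x', q z x' y * p x' y := fun z y =>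
    Finset.sum_pos (fun x' _ => mul_pos (hq z x' y) (hp x' y)) univ_nonempty
  have hC : ∀ z, (0:ℝ) < ∑ x', ∑ y', q z x' y' * p x' y' := fun z =>
    Finset.sum_pos (fun x' _ => Finset.sum_pos (fun y' _ => mul_pos (hq z x' y') (hp x' y')) univ_nonempty) univ_nonempty
  have hpX : ∀ x, (0:ℝ) < ∑ y', p x y' := fun x =>
    Finset.sum_pos (fun y' _ => hp x y') univ_nonempty
  have hpY : ∀ y, (0:ℝ) < ∑ x', p x' y := fun y =>
    Finset.sum_pos (fun x' _ => hp x' y) univ_nonempty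
  have hvp : ∀ x y, ∑ z, v z x y * p x y = 0 := fun x y => by
    rw [← Finset.sum_mul, hv, zero_mul]
  have rot : ∀ f : Fin k → Fin m → Fin n → ℝ,
      (∑ x, ∑ y, ∑ z, f z x y) = ∑ z, ∑ x, ∑ y, f z x y := fun f =>
    calc ∑ x, ∑ y, ∑ z, f z x y
        = ∑ x, ∑ z, ∑ y, f z x y := Finset.sum_congr rfl (fun x _ => Finset.sum_comm)
      _ = ∑ z, ∑ x, ∑ y, f z x y := Finset.sum_comm
  -- pointwise log identity
  have hpoint : ∀ (z : Fin k) (x : Fin m) (y : Fin n),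
      Real.log ((q z x y * p x y) * (∑ x', ∑ y', q z x' y' * p x' y') /
          ((∑ y', q z x y' * p x y') * (∑ x', q z x' y * p x' y)))
        - β * Real.log (∑ x', ∑ y', q z x' y' * p x' y')
      = Real.log (q z x y * (∑ x', ∑ y', q z x' y' * p x' y') ^ (1 - β) /
          ((∑ y', q z x y' * p x y') / (∑ y', p x y') *
            ((∑ x', q z x' y * p x' y) / (∑ x', p x' y))))
        + (Real.log (p x y) - Real.log (∑ y', p x y') - Real.log (∑ x', p x' y)) := by
    intro z x y
    have hqx : qX p q z x ≠ 0 := (div_pos (hB1 z x) (hpX x)).ne'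
    rw [Real.log_div (mul_ne_zero (mul_pos (hq z x y) (hp x y)).ne' (hC z).ne')
        (mul_ne_zero (hB1 z x).ne' (hB2 z y).ne'),
      Real.log_mul (mul_pos (hq z x y) (hp x y)).ne' (hC z).ne',
      Real.log_mul (hq z x y).ne' (hp x y).ne',
      Real.log_mul (hB1 z x).ne' (hB2 z y).ne',
      Real.log_div (mul_ne_zero (hq z x y).ne' (Real.rpow_pos_of_pos (hC z) (1-β)).ne')
        (mul_ne_zero (div_pos (hB1 z x) (hpX x)).ne' (div_pos (hB2 z y) (hpY y)).ne'),
      Real.log_mul (hq z x y).ne' (Real.rpow_pos_of_pos (hC z) (1-β)).ne',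
      Real.log_rpow (hC z),
      Real.log_mul (div_pos (hB1 z x) (hpX x)).ne' (div_pos (hB2 z y) (hpY y)).ne',
      Real.log_div (hB1 z x).ne' (hpX x).ne',
      Real.log_div (hB2 z y).ne' (hpY y).ne']
    ring

  have hC'sum : ∑ z, ∑ x, ∑ y, v z x y * p x y = 0 := by
    rw [Finset.sum_comm]
    refine Finset.sum_eq_zero fun x _ => ?_
    rw [Finset.sum_comm]
    exact Finset.sum_eq_zero fun y _ => hvp x y
  have h0 : ∑ x, ∑ y, ∑ z, v z x y * p x y = 0 :=
    (rot _).trans hC'sum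
  have h1 : (∑ x, ∑ y, ∑ z, q z x y * p x y *
      ((∑ x', ∑ y', v z x' y' * p x' y') / (∑ x', ∑ y', q z x' y' * p x' y'))) = 0 := by
    rw [rot]
    calc ∑ z, ∑ x, ∑ y, q z x y * p x y *
          ((∑ x', ∑ y', v z x' y' * p x' y') / (∑ x', ∑ y', q z x' y' * p x' y'))
        = ∑ z, ∑ x, ∑ y, v z x y * p x y := by
          refine Finset.sum_congr rfl fun z _ => ?_
          have hpull : ∑ x, ∑ y, q z x y * p x y *
              ((∑ x', ∑ y', v z x' y' * p x' y') / (∑ x', ∑ y', q z x' y' * p x' y'))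
              = (∑ x, ∑ y, q z x y * p x y) *
              ((∑ x', ∑ y', v z x' y' * p x' y') / (∑ x', ∑ y', q z x' y' * p x' y')) := by
            rw [Finset.sum_mul]
            exact Finset.sum_congr rfl fun x _ => (Finset.sum_mul _ _ _).symm
          rw [hpull, mul_comm, div_mul_cancel₀ _ (hC z).ne']
      _ = 0 := hC'sum
  have h2 : (∑ x, ∑ y, ∑ z, q z x y * p x y *
      ((∑ y', v z x y' * p x y') / (∑ y', q z x y' * p x y'))) = 0 := by
    rw [rot]
    calc ∑ z, ∑ x, ∑ y, q z x y * p x y *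
          ((∑ y', v z x y' * p x y') / (∑ y', q z x y' * p x y'))
        = ∑ z, ∑ x, ∑ y, v z x y * p x y := by
          refine Finset.sum_congr rfl fun z _ => Finset.sum_congr rfl fun x _ => ?_
          rw [← Finset.sum_mul, mul_comm, div_mul_cancel₀ _ (hB1 z x).ne']
      _ = 0 := hC'sum
  have h3 : (∑ x, ∑ y, ∑ z, q z x y * p x y *
      ((∑ x', v z x' y * p x' y) / (∑ x', q z x' y * p x' y))) = 0 := by
    rw [rot]
    calc ∑ z, ∑ x, ∑ y, q z x y * p x y *
          ((∑ x', v z x' y * p x' y) / (∑ x', q z x' y * p x' y))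
        = ∑ z, ∑ y, ∑ x, q z x y * p x y *
          ((∑ x', v z x' y * p x' y) / (∑ x', q z x' y * p x' y)) :=
          Finset.sum_congr rfl fun z _ => Finset.sum_comm
      _ = ∑ z, ∑ y, ∑ x, v z x y * p x y := by
          refine Finset.sum_congr rfl fun z _ => Finset.sum_congr rfl fun y _ => ?_
          rw [← Finset.sum_mul, mul_comm, div_mul_cancel₀ _ (hB2 z y).ne']
      _ = 0 := by
          rw [Finset.sum_comm]
          refine Finset.sum_eq_zero fun y _ => ?_
          rw [Finset.sum_comm]
          exact Finset.sum_eq_zero fun x _ => hvp x y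
  have hT1 : (∑ z, (∑ x', ∑ y', v z x' y' * p x' y') *
      Real.log (∑ x', ∑ y', q z x' y' * p x' y'))
      = ∑ x, ∑ y, ∑ z, v z x y * p x y *
          Real.log (∑ x', ∑ y', q z x' y' * p x' y') := by
    rw [rot]
    refine Finset.sum_congr rfl fun z _ => ?_
    rw [Finset.sum_mul]
    exact Finset.sum_congr rfl fun x _ => Finset.sum_mul _ _ _
  have hmain : (∑ x, ∑ y, ∑ z, v z x y * p x y *
        Real.log ((q z x y * p x y) * (∑ x', ∑ y', q z x' y' * p x' y') /
          ((∑ y', q z x y' * p x y') * (∑ x', q z x' y * p x' y))))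
      - β * (∑ z, (∑ x', ∑ y', v z x' y' * p x' y') *
          Real.log (∑ x', ∑ y', q z x' y' * p x' y'))
      = ∑ z, ∑ x, ∑ y, v z x y * p x y *
          Real.log (q z x y * (∑ x', ∑ y', q z x' y' * p x' y') ^ (1 - β) /
            ((∑ y', q z x y' * p x y') / (∑ y', p x y') *
              ((∑ x', q z x' y * p x' y) / (∑ x', p x' y)))) := by
    rw [hT1, ← rot]
    have hβpush : β * (∑ x, ∑ y, ∑ z, v z x y * p x y *
        Real.log (∑ x', ∑ y', q z x' y' * p x' y'))
        = ∑ x, ∑ y, ∑ z, β * (v z x y * p x y *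
            Real.log (∑ x', ∑ y', q z x' y' * p x' y')) := by
      rw [Finset.mul_sum]
      refine Finset.sum_congr rfl fun x _ => ?_
      rw [Finset.mul_sum]
      exact Finset.sum_congr rfl fun y _ => Finset.mul_sum _ _ _
    rw [hβpush]
    simp only [← Finset.sum_sub_distrib]
    refine Finset.sum_congr rfl fun x _ => Finset.sum_congr rfl fun y _ => ?_
    calc ∑ z, (v z x y * p x y *
            Real.log ((q z x y * p x y) * (∑ x', ∑ y', q z x' y' * p x' y') /
              ((∑ y', q z x y' * p x y') * (∑ x', q z x' y * p x' y)))
          - β * (v z x y * p x y * Real.log (∑ x', ∑ y', q z x' y' * p x' y')))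
        = ∑ z, (v z x y * p x y *
            Real.log (q z x y * (∑ x', ∑ y', q z x' y' * p x' y') ^ (1 - β) /
              ((∑ y', q z x y' * p x y') / (∑ y', p x y') *
                ((∑ x', q z x' y * p x' y) / (∑ x', p x' y))))
          + v z x y * p x y *
            (Real.log (p x y) - Real.log (∑ y', p x y') - Real.log (∑ x', p x' y))) := by
          refine Finset.sum_congr rfl fun z _ => ?_
          linear_combination (v z x y * p x y) * hpoint z x y
      _ = _ := by
          rw [Finset.sum_add_distrib, ← Finset.sum_mul, hvp, zero_mul, add_zero]
  simp only [mul_add, mul_one, mul_sub, Finset.sum_add_distrib, Finset.sum_sub_distrib]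
  linear_combination hmain + h0 + h1 - h2 - h3 - β * hC'sum

lemma hasDerivAt_loss {m n k : ℕ} (hm : 1 ≤ m) (hn : 1 ≤ n) (β : ℝ)
    (p : Fin m → Fin n → ℝ) (hp : ∀ x y, 0 < p x y)
    (q : Fin k → Fin m → Fin n → ℝ) (hq : ∀ z x y, 0 < q z x y)
    (v : Fin k → Fin m → Fin n → ℝ) (hv : ∀ x y, ∑ z, v z x y = 0) :
    HasDerivAt (fun t : ℝ => loss β p (fun z x y => q z x y + t * v z x y))
      (∑ z, ∑ x, ∑ y, v z x y * p x y *
        Real.log (q z x y * (qZ p q z) ^ (1 - β) / (qX p q z x * qY p q z y))) 0 := by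
  have H1 : HasDerivAt (fun t : ℝ => ∑ x, ∑ y, ∑ z,
      ((q z x y + t * v z x y) * p x y) *
        Real.log (((q z x y + t * v z x y) * p x y) *
          (∑ x', ∑ y', (q z x' y' + t * v z x' y') * p x' y') /
          ((∑ y', (q z x y' + t * v z x y') * p x y') *
           (∑ x', (q z x' y + t * v z x' y) * p x' y))))
      (∑ x, ∑ y, ∑ z,
        (v z x y * p x y *
          (Real.log ((q z x y * p x y) * (∑ x', ∑ y', q z x' y' * p x' y') /
            ((∑ y', q z x y' * p x y') * (∑ x', q z x' y * p x' y))) + 1)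
         + (q z x y * p x y) *
           ((∑ x', ∑ y', v z x' y' * p x' y') / (∑ x', ∑ y', q z x' y' * p x' y')
            - (∑ y', v z x y' * p x y') / (∑ y', q z x y' * p x y')
            - (∑ x', v z x' y * p x' y) / (∑ x', q z x' y * p x' y)))) 0 :=
    HasDerivAt.fun_sum fun x _ => HasDerivAt.fun_sum fun y _ => HasDerivAt.fun_sum fun z _ =>
      hasDerivAt_term p hp q hq v z x y
  have H2 : HasDerivAt (fun t : ℝ => ∑ z,
      (∑ x', ∑ y', (q z x' y' + t * v z x' y') * p x' y') *
        Real.log (∑ x', ∑ y', (q z x' y' + t * v z x' y') * p x' y'))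
      (∑ z, ((∑ x', ∑ y', v z x' y' * p x' y') *
          Real.log (∑ x', ∑ y', q z x' y' * p x' y') +
        (∑ x', ∑ y', v z x' y' * p x' y'))) 0 :=
    HasDerivAt.fun_sum fun z _ => hasDerivAt_zterm p hp q hq hm hn v z
  have H := H1.sub (H2.const_mul β)
  have heq := value_eq hm hn β p hp q hq v hv
  rw [heq] at H
  simp only [loss, qZ]
  exact H

lemma fixed_iff_delta {m n k : ℕ} (hm : 1 ≤ m) (hn : 1 ≤ n) (hk : 1 ≤ k) (β : ℝ)
    (p : Fin m → Fin n → ℝ) (hp : ∀ x y, 0 < p x y)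
    (q : Fin k → Fin m → Fin n → ℝ) (hq : ∀ z x y, 0 < q z x y)
    (hqs : ∀ x y, ∑ z, q z x y = 1) :
    latentUpdate β p q = q ↔
      ∃ δ : Fin m → Fin n → ℝ, ∀ z x y,
        Real.log (q z x y * (qZ p q z) ^ (1 - β) / (qX p q z x * qY p q z y)) = δ x y := by
  haveI : Nonempty (Fin m) := ⟨⟨0, hm⟩⟩
  haveI : Nonempty (Fin n) := ⟨⟨0, hn⟩⟩
  haveI : Nonempty (Fin k) := ⟨⟨0, hk⟩⟩
  have hqX : ∀ z x, 0 < qX p q z x := fun z x =>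
    div_pos (Finset.sum_pos (fun y' _ => mul_pos (hq z x y') (hp x y')) univ_nonempty)
      (Finset.sum_pos (fun y' _ => hp x y') univ_nonempty)
  have hqY : ∀ z y, 0 < qY p q z y := fun z y =>
    div_pos (Finset.sum_pos (fun x' _ => mul_pos (hq z x' y) (hp x' y)) univ_nonempty)
      (Finset.sum_pos (fun x' _ => hp x' y) univ_nonempty)
  have hqZ : ∀ z, 0 < qZ p q z := fun z =>
    Finset.sum_pos (fun x' _ => Finset.sum_pos (fun y' _ => mul_pos (hq z x' y') (hp x' y'))
      univ_nonempty) univ_nonempty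
  have hR : ∀ z, 0 < (qZ p q z) ^ (1 - β) := fun z => Real.rpow_pos_of_pos (hqZ z) _
  have hA : ∀ z x y, 0 < qX p q z x * qY p q z y / (qZ p q z) ^ (1 - β) := fun z x y =>
    div_pos (mul_pos (hqX z x) (hqY z y)) (hR z)
  have hS : ∀ x y, 0 < ∑ z', qX p q z' x * qY p q z' y / (qZ p q z') ^ (1 - β) := fun x y =>
    Finset.sum_pos (fun z' _ => hA z' x y) univ_nonempty
  constructor
  · intro hfix
    refine ⟨fun x y => -Real.log (∑ z', qX p q z' x * qY p q z' y / (qZ p q z') ^ (1 - β)),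
      fun z x y => ?_⟩
    have e : qX p q z x * qY p q z y / (qZ p q z) ^ (1 - β) /
        (∑ z', qX p q z' x * qY p q z' y / (qZ p q z') ^ (1 - β)) = q z x y :=
      congrFun (congrFun (congrFun hfix z) x) y
    have harg : q z x y * (qZ p q z) ^ (1 - β) / (qX p q z x * qY p q z y)
        = (∑ z', qX p q z' x * qY p q z' y / (qZ p q z') ^ (1 - β))⁻¹ := by
      have e1 : qX p q z x ≠ 0 := (hqX z x).ne'
      have e2 : qY p q z y ≠ 0 := (hqY z y).ne'
      have e3 : (qZ p q z) ^ (1 - β) ≠ 0 := (hR z).ne'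
      have e4 : (∑ z', qX p q z' x * qY p q z' y / (qZ p q z') ^ (1 - β)) ≠ 0 := (hS x y).ne'
      rw [← e]
      field_simp
    rw [harg, Real.log_inv]
  · rintro ⟨δ, hδ⟩
    have hqe : ∀ z x y, q z x y = Real.exp (δ x y) *
        (qX p q z x * qY p q z y / (qZ p q z) ^ (1 - β)) := by
      intro z x y
      have h1 : Real.exp (δ x y) =
          q z x y * (qZ p q z) ^ (1 - β) / (qX p q z x * qY p q z y) := by
        rw [← hδ z x y, Real.exp_log
          (div_pos (mul_pos (hq z x y) (hR z)) (mul_pos (hqX z x) (hqY z y)))]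
      have e1 : qX p q z x ≠ 0 := (hqX z x).ne'
      have e2 : qY p q z y ≠ 0 := (hqY z y).ne'
      have e3 : (qZ p q z) ^ (1 - β) ≠ 0 := (hR z).ne'
      rw [h1]
      field_simp
    funext z x y
    have hsum : Real.exp (δ x y) *
        (∑ z', qX p q z' x * qY p q z' y / (qZ p q z') ^ (1 - β)) = 1 := by
      rw [Finset.mul_sum,
        show (∑ z', Real.exp (δ x y) * (qX p q z' x * qY p q z' y / (qZ p q z') ^ (1 - β)))
          = ∑ z', q z' x y from Finset.sum_congr rfl fun z' _ => (hqe z' x y).symm]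
      exact hqs x y
    have hinv : Real.exp (δ x y) =
        (∑ z', qX p q z' x * qY p q z' y / (qZ p q z') ^ (1 - β))⁻¹ :=
      eq_inv_of_mul_eq_one_left hsum
    simp only [latentUpdate]
    rw [hqe z x y, hinv, div_eq_inv_mul]

/-- `q` is a fixed point of the LatentSearch update `T_β` iff it is a
first-order stationary point of the loss `L_β` subject to the normalization constraints
(directional derivatives along feasible directions vanish); equivalently, iff
`log(q(z|x,y) (qZ z)^{1-β} / (q(z|x) q(z|y)))` does not depend on `z`. -/
theorem latentUpdate_fixedPoint_iff_stationary (m n k : ℕ)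
    (hm : 1 ≤ m) (hn : 1 ≤ n) (hk : 1 ≤ k) (β : ℝ)
    (p : Fin m → Fin n → ℝ) (hp : IsJointPMF p)
    (q : Fin k → Fin m → Fin n → ℝ) (hq : IsCondPMF q) :
    (latentUpdate β p q = q ↔
      ∀ v : Fin k → Fin m → Fin n → ℝ, (∀ x y, ∑ z, v z x y = 0) →
        deriv (fun t : ℝ => loss β p (fun z x y => q z x y + t * v z x y)) 0 = 0) ∧
    (latentUpdate β p q = q ↔
      ∃ δ : Fin m → Fin n → ℝ, ∀ z x y,
        Real.log (q z x y * (qZ p q z) ^ (1 - β) / (qX p q z x * qY p q z y)) = δ x y) := by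
  obtain ⟨hp1, hp2⟩ := hp
  obtain ⟨hq1, hq2⟩ := hq
  have hFD := fixed_iff_delta hm hn hk β p hp1 q hq1 hq2
  have hDS : (∃ δ : Fin m → Fin n → ℝ, ∀ z x y,
      Real.log (q z x y * (qZ p q z) ^ (1 - β) / (qX p q z x * qY p q z y)) = δ x y) ↔
      (∀ v : Fin k → Fin m → Fin n → ℝ, (∀ x y, ∑ z, v z x y = 0) →
        deriv (fun t : ℝ => loss β p (fun z x y => q z x y + t * v z x y)) 0 = 0) := by
    constructor
    · rintro ⟨δ, hδ⟩ v hv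
      rw [(hasDerivAt_loss hm hn β p hp1 q hq1 v hv).deriv]
      rw [Finset.sum_comm]
      refine Finset.sum_eq_zero fun x _ => ?_
      rw [Finset.sum_comm]
      refine Finset.sum_eq_zero fun y _ => ?_
      calc ∑ z, v z x y * p x y *
            Real.log (q z x y * (qZ p q z) ^ (1 - β) / (qX p q z x * qY p q z y))
          = ∑ z, v z x y * p x y * δ x y :=
            Finset.sum_congr rfl fun z _ => by rw [hδ z x y]
        _ = 0 := by rw [← Finset.sum_mul, ← Finset.sum_mul, hv, zero_mul, zero_mul]
    · intro hstat
      refine ⟨fun x y => Real.log (q ⟨0, hk⟩ x y * (qZ p q ⟨0, hk⟩) ^ (1 - β) /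
        (qX p q ⟨0, hk⟩ x * qY p q ⟨0, hk⟩ y)), fun z0 x0 y0 => ?_⟩
      set v : Fin k → Fin m → Fin n → ℝ := fun z x y =>
        if x = x0 then (if y = y0 then
          ((if z = z0 then (1:ℝ) else 0) - (if z = (⟨0, hk⟩ : Fin k) then 1 else 0))
          else 0) else 0 with hvdef
      have hv : ∀ x y, ∑ z, v z x y = 0 := by
        intro x y
        by_cases hx : x = x0 <;> by_cases hy : y = y0 <;>
          simp [hvdef, hx, hy, Finset.sum_sub_distrib, Finset.sum_ite_eq']
      have H := (hasDerivAt_loss hm hn β p hp1 q hq1 v hv).deriv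
      have h0 := hstat v hv
      rw [H] at h0
      have hsum : (∑ z, ∑ x, ∑ y, v z x y * p x y *
          Real.log (q z x y * (qZ p q z) ^ (1 - β) / (qX p q z x * qY p q z y)))
          = p x0 y0 * Real.log (q z0 x0 y0 * (qZ p q z0) ^ (1 - β) /
              (qX p q z0 x0 * qY p q z0 y0))
          - p x0 y0 * Real.log (q ⟨0, hk⟩ x0 y0 * (qZ p q ⟨0, hk⟩) ^ (1 - β) /
              (qX p q ⟨0, hk⟩ x0 * qY p q ⟨0, hk⟩ y0)) := by
        simp [hvdef, ite_mul, zero_mul, sub_mul, Finset.sum_sub_distrib,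
          Finset.sum_ite_eq', one_mul]
      rw [hsum] at h0
      exact mul_left_cancel₀ (hp1 x0 y0).ne' (sub_eq_zero.mp h0)
  exact ⟨hFD.trans hDS, hFD⟩
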